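/- In the Attacker-Defender game with equal endowments R, Defender's expected equilibrium conflict investment conditional on Attacker winning, respectively losing, satisfies lim_{R→∞} E(d|W)/R = 3 − e and lim_{R→∞} E(d|L)/R = 1 − 1/(e−1), where E(d|W) = (Σ_{i>j} a*_i d*_j · j)/P(W) and E(d|L) = (Σ_{i≤j} a*_i d*_j · j)/(1 − P(W)). -/

import Mathlib

/-- The `n`-th harmonic number `H_n = 1 + 1/2 + ... + 1/n` (with `H_0 = 0`). -/
noncomputable def H (n : ℕ) : ℝ := ∑ k ∈ Finset.Icc 1 n, (1 : ℝ) / k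

/-- `l` is the upper bound `l*` for endowment `R`:
the unique `1 ≤ l ≤ R - 1` with `H_R - H_{R-l} < 1 < H_R - H_{R-l-1}`. -/
def IsUpperBound (R l : ℕ) : Prop :=
  1 ≤ l ∧ l ≤ R - 1 ∧ H R - H (R - l) < 1 ∧ 1 < H R - H (R - l - 1)

/-- Attacker's equilibrium mixed strategy (defender endowment `R`, upper bound `l`). -/
noncomputable def astar (R l : ℕ) : ℕ → ℝ := fun i =>
  if i = 0 then ((R : ℝ) - l) / R
  else if i ≤ l then ((R : ℝ) - l) / (((R : ℝ) - i + 1) * ((R : ℝ) - i))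
  else 0

/-- Defender's equilibrium mixed strategy (defender endowment `R`, upper bound `l`). -/
noncomputable def dstar (R l : ℕ) : ℕ → ℝ := fun j =>
  if j < l then 1 / ((R : ℝ) - j)
  else if j = l then 1 - ∑ k ∈ Finset.range l, 1 / ((R : ℝ) - k)
  else 0

/-- The probability that Attacker wins (i.e. that `i > j`). -/
noncomputable def PW (RA RD : ℕ) (a d : ℕ → ℝ) : ℝ :=
  ∑ i ∈ Finset.range (RA + 1), ∑ j ∈ Finset.range (RD + 1), if j < i then a i * d j else 0

/-- Defender's expected investment conditional on Attacker winning. -/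
noncomputable def EdW (RA RD : ℕ) (a d : ℕ → ℝ) : ℝ :=
  (∑ i ∈ Finset.range (RA + 1), ∑ j ∈ Finset.range (RD + 1),
      if j < i then a i * d j * j else 0) / PW RA RD a d

/-- Defender's expected investment conditional on Attacker losing. -/
noncomputable def EdL (RA RD : ℕ) (a d : ℕ → ℝ) : ℝ :=
  (∑ i ∈ Finset.range (RA + 1), ∑ j ∈ Finset.range (RD + 1),
      if i ≤ j then a i * d j * j else 0) / (1 - PW RA RD a d)

noncomputable def gg (R j : ℕ) : ℝ := 1 / ((R:ℝ) - j)
noncomputable def AA (R n : ℕ) : ℝ := ∑ j ∈ Finset.range n, gg R j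
noncomputable def QQ (R n : ℕ) : ℝ := ∑ j ∈ Finset.range n, (gg R j)^2

lemma abelA (R n : ℕ) : ∑ i ∈ Finset.range n, (gg R (i+1) - gg R i) * AA R (i+1)
    = gg R n * AA R n - QQ R n := by
  induction n with
  | zero => simp [AA, QQ]
  | succ n ih =>
    rw [Finset.sum_range_succ, ih]
    have h1 : AA R (n+1) = AA R n + gg R n := Finset.sum_range_succ _ n
    have h2 : QQ R (n+1) = QQ R n + (gg R n)^2 := Finset.sum_range_succ _ n
    rw [h1, h2]; ring

lemma abelI (R n : ℕ) : ∑ i ∈ Finset.range n, (gg R (i+1) - gg R i) * ((i:ℝ)+1)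
    = (n:ℝ) * gg R n - AA R n := by
  induction n with
  | zero => simp [AA]
  | succ n ih =>
    rw [Finset.sum_range_succ, ih]
    have h1 : AA R (n+1) = AA R n + gg R n := Finset.sum_range_succ _ n
    rw [h1]; push_cast; ring

lemma filter_lt {N i : ℕ} (h : i ≤ N) (f : ℕ → ℝ) :
    ∑ j ∈ Finset.range N, (if j < i then f j else 0) = ∑ j ∈ Finset.range i, f j := by
  rw [Finset.sum_ite, Finset.sum_const_zero, add_zero]
  congr 1
  ext j
  simp only [Finset.mem_filter, Finset.mem_range]
  omega

lemma astar_succ (R l i : ℕ) (hi : i < l) (hR : l + 1 ≤ R) :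
    astar R l (i+1) = ((R:ℝ) - l) * (gg R (i+1) - gg R i) := by
  have hl : (l:ℝ) ≤ (R:ℝ) - 1 := by
    have : (l:ℝ) + 1 ≤ (R:ℝ) := by exact_mod_cast hR
    linarith
  have hi' : (i:ℝ) ≤ (l:ℝ) - 1 := by
    have : (i:ℝ) + 1 ≤ (l:ℝ) := by exact_mod_cast hi
    linarith
  have h1 : (R:ℝ) - i - 1 > 0 := by linarith
  have h2 : (R:ℝ) - i > 0 := by linarith
  simp only [astar, gg, if_neg (Nat.succ_ne_zero i), if_pos (by omega : i + 1 ≤ l)]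
  push_cast
  rw [show (R:ℝ) - ((i:ℝ) + 1) + 1 = (R:ℝ) - (i:ℝ) from by ring,
    show (R:ℝ) - ((i:ℝ) + 1) = (R:ℝ) - (i:ℝ) - 1 from by ring]
  field_simp
  ring_nf

lemma sum_a_f (R l : ℕ) (hR : l + 1 ≤ R) (F : ℕ → ℝ) :
    ∑ i ∈ Finset.range (R+1), astar R l i * F i
      = ((R:ℝ)-l)/R * F 0
        + ∑ i ∈ Finset.range l, ((R:ℝ) - l) * (gg R (i+1) - gg R i) * F (i+1) := by
  rw [Finset.sum_range_succ']
  have h0 : astar R l 0 * F 0 = ((R:ℝ)-l)/R * F 0 := by simp [astar]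
  rw [h0]
  rw [add_comm]
  congr 1
  rw [← Finset.sum_subset (Finset.range_subset_range.mpr (by omega : l ≤ R))]
  · exact Finset.sum_congr rfl fun i hi => by
      rw [astar_succ R l i (Finset.mem_range.mp hi) hR]
  · intro i _ hi
    have : ¬ (i + 1 ≤ l) := by simp at hi; omega
    simp [astar, this]

lemma Rl_pos (R l : ℕ) (hR : l + 1 ≤ R) : (0:ℝ) < (R:ℝ) - l := by
  have : (l:ℝ) + 1 ≤ (R:ℝ) := by exact_mod_cast hR
  linarith

lemma gg_l (R l : ℕ) : gg R l = 1 / ((R:ℝ) - l) := rfl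

lemma sum_astar (R l : ℕ) (hR : l + 1 ≤ R) :
    ∑ i ∈ Finset.range (R+1), astar R l i = 1 := by
  have h := sum_a_f R l hR (fun _ => 1)
  simp only [mul_one] at h
  rw [h, ← Finset.mul_sum, Finset.sum_range_sub (gg R), gg_l]
  have hm := Rl_pos R l hR
  have hRpos : (0:ℝ) < (R:ℝ) := by
    have : 0 < R := by omega
    exact_mod_cast this
  have g0 : gg R 0 = 1 / (R:ℝ) := by simp [gg]
  rw [g0]
  field_simp
  ring

-- dstar inner sums
lemma D_eq (R l i : ℕ) (hi : i ≤ l) :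
    ∑ j ∈ Finset.range i, dstar R l j = AA R i :=
  Finset.sum_congr rfl fun j hj => by
    have : j < l := lt_of_lt_of_le (Finset.mem_range.mp hj) hi
    simp [dstar, this, gg]

lemma Dj_eq (R l i : ℕ) (hi : i ≤ l) (hR : l + 1 ≤ R) :
    ∑ j ∈ Finset.range i, dstar R l j * j = (R:ℝ) * AA R i - i := by
  have : ∀ j ∈ Finset.range i, dstar R l j * j = (R:ℝ) * gg R j - 1 := by
    intro j hj
    have hjl : j < l := lt_of_lt_of_le (Finset.mem_range.mp hj) hi
    have hj0 : (0:ℝ) < (R:ℝ) - j := by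
      have e1 : (j:ℝ) + 1 ≤ (l:ℝ) := by exact_mod_cast hjl
      have e2 : (l:ℝ) + 1 ≤ (R:ℝ) := by exact_mod_cast hR
      linarith
    simp only [dstar, if_pos hjl, gg]
    field_simp
    ring
  rw [Finset.sum_congr rfl this, Finset.sum_sub_distrib, ← Finset.mul_sum,
    Finset.sum_const, Finset.card_range, nsmul_eq_mul, mul_one, AA]

lemma inner_red (N : ℕ) (c : ℝ) (f : ℕ → ℝ) (i : ℕ) (hi : i ≤ N) :
    ∑ j ∈ Finset.range N, (if j < i then c * f j else 0)
      = c * ∑ j ∈ Finset.range i, f j := by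
  rw [filter_lt hi (fun j => c * f j), Finset.mul_sum]

lemma PW_eq (R l : ℕ) (hR : l + 1 ≤ R) :
    PW R R (astar R l) (dstar R l) = AA R l - ((R:ℝ) - l) * QQ R l := by
  unfold PW
  have h1 : ∀ i ∈ Finset.range (R+1),
      (∑ j ∈ Finset.range (R+1), if j < i then astar R l i * dstar R l j else 0)
        = astar R l i * ∑ j ∈ Finset.range i, dstar R l j := fun i hi =>
    inner_red (R+1) _ _ i (by have := Finset.mem_range.mp hi; omega)
  rw [Finset.sum_congr rfl h1, sum_a_f R l hR (fun i => ∑ j ∈ Finset.range i, dstar R l j)]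
  simp only [Finset.range_zero, Finset.sum_empty, mul_zero, zero_add]
  have h2 : ∀ i ∈ Finset.range l,
      ((R:ℝ)-l) * (gg R (i+1) - gg R i) * (∑ j ∈ Finset.range (i+1), dstar R l j)
        = ((R:ℝ)-l) * ((gg R (i+1) - gg R i) * AA R (i+1)) := by
    intro i hi
    rw [D_eq R l (i+1) (Finset.mem_range.mp hi)]
    ring
  rw [Finset.sum_congr rfl h2, ← Finset.mul_sum, abelA, gg_l]
  have hm := Rl_pos R l hR
  field_simp

lemma NW_eq (R l : ℕ) (hR : l + 1 ≤ R) :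
    (∑ i ∈ Finset.range (R+1), ∑ j ∈ Finset.range (R+1),
        if j < i then astar R l i * dstar R l j * j else 0)
      = (R:ℝ) * (AA R l - ((R:ℝ)-l) * QQ R l) - ((l:ℝ) - ((R:ℝ)-l) * AA R l) := by
  have h1 : ∀ i ∈ Finset.range (R+1),
      (∑ j ∈ Finset.range (R+1), if j < i then astar R l i * dstar R l j * j else 0)
        = astar R l i * ∑ j ∈ Finset.range i, dstar R l j * j := by
    intro i hi
    have : ∀ j, astar R l i * dstar R l j * (j:ℝ) = astar R l i * (dstar R l j * j) :=
      fun j => mul_assoc _ _ _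
    simp only [this]
    exact inner_red (R+1) _ _ i (by have := Finset.mem_range.mp hi; omega)
  rw [Finset.sum_congr rfl h1, sum_a_f R l hR (fun i => ∑ j ∈ Finset.range i, dstar R l j * j)]
  simp only [Finset.range_zero, Finset.sum_empty, mul_zero, zero_add]
  have h2 : ∀ i ∈ Finset.range l,
      ((R:ℝ)-l) * (gg R (i+1) - gg R i) * (∑ j ∈ Finset.range (i+1), dstar R l j * j)
        = ((R:ℝ)-l) * ((R:ℝ) * ((gg R (i+1) - gg R i) * AA R (i+1))
            - (gg R (i+1) - gg R i) * ((i:ℝ)+1)) := by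
    intro i hi
    rw [Dj_eq R l (i+1) (Finset.mem_range.mp hi) hR]
    push_cast
    ring
  rw [Finset.sum_congr rfl h2, ← Finset.mul_sum]
  rw [Finset.sum_sub_distrib, ← Finset.mul_sum, abelA, abelI, gg_l]
  have hm := Rl_pos R l hR
  field_simp

lemma Ed_eq (R l : ℕ) (hR : l + 1 ≤ R) :
    ∑ j ∈ Finset.range (R+1), dstar R l j * j = ((R:ℝ)-l) * AA R l := by
  have hsub : ∑ j ∈ Finset.range (R+1), dstar R l j * j
      = ∑ j ∈ Finset.range (l+1), dstar R l j * j := by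
    symm
    apply Finset.sum_subset (Finset.range_subset_range.mpr (by omega))
    intro j _ hj
    have hj1 : ¬ j < l := by simp at hj; omega
    have hj2 : j ≠ l := by simp at hj; omega
    simp [dstar, hj1, hj2]
  rw [hsub, Finset.sum_range_succ, Dj_eq R l l le_rfl hR]
  have hdl : dstar R l l = 1 - AA R l := by
    simp [dstar, AA, gg]
  rw [hdl]
  ring

lemma NL_eq (R l : ℕ) (hR : l + 1 ≤ R) :
    (∑ i ∈ Finset.range (R+1), ∑ j ∈ Finset.range (R+1),
        if i ≤ j then astar R l i * dstar R l j * j else 0)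
      = ((R:ℝ)-l) * AA R l
        - (∑ i ∈ Finset.range (R+1), ∑ j ∈ Finset.range (R+1),
            if j < i then astar R l i * dstar R l j * j else 0) := by
  have key : ∀ i j : ℕ, (if i ≤ j then astar R l i * dstar R l j * j else 0)
      = astar R l i * (dstar R l j * j)
        - (if j < i then astar R l i * dstar R l j * j else 0) := by
    intro i j
    by_cases h : i ≤ j
    · rw [if_pos h, if_neg (by omega), mul_assoc]; ring
    · rw [if_neg h, if_pos (by omega)]; ring
  simp only [key]
  rw [Finset.sum_congr rfl (fun i _ => Finset.sum_sub_distrib _ _), Finset.sum_sub_distrib]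
  congr 1
  have : ∀ i ∈ Finset.range (R+1),
      ∑ j ∈ Finset.range (R+1), astar R l i * (dstar R l j * j)
        = astar R l i * ∑ j ∈ Finset.range (R+1), dstar R l j * j := by
    intro i _
    rw [Finset.mul_sum]
  rw [Finset.sum_congr rfl this, ← Finset.sum_mul, sum_astar R l hR, one_mul, Ed_eq R l hR]

lemma H_AA (R : ℕ) : ∀ l : ℕ, l ≤ R → H R - H (R - l) = AA R l := by
  intro l
  induction l with
  | zero => simp [AA]
  | succ n ih =>
    intro hl
    have hn : n ≤ R := by omega
    have hb : R - n = (R - (n+1)) + 1 := by omega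
    have step : H (R - n) = H (R - (n+1)) + 1 / ((R:ℝ) - n) := by
      rw [hb, H, H, Finset.sum_Icc_succ_top (Nat.succ_le_succ (Nat.zero_le _))]
      congr 1
      have hc : ((R - (n+1) + 1 : ℕ):ℝ) = (R:ℝ) - n := by
        rw [← hb, Nat.cast_sub hn]
      rw [hc]
    rw [AA, Finset.sum_range_succ, ← AA, ← ih hn, step]
    simp only [gg]
    ring

lemma AA_ge (R l : ℕ) (hl : l ≤ R) :
    Real.log ((R:ℝ)+1) - Real.log ((R:ℝ)+1-l) ≤ AA R l := by
  set f : ℕ → ℝ := fun j => Real.log ((R:ℝ)+1-j) with hf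
  have key : ∀ j ∈ Finset.range l, f j - f (j+1) ≤ gg R j := by
    intro j hj
    have hjl : j < l := Finset.mem_range.mp hj
    have hx : (0:ℝ) < (R:ℝ) - j := by
      have : (j:ℝ) + 1 ≤ (R:ℝ) := by exact_mod_cast (by omega : j + 1 ≤ R)
      linarith
    have hfj1 : f (j+1) = Real.log ((R:ℝ) - j) := by
      rw [hf]
      congr 1
      push_cast
      ring
    have hfj : f j = Real.log (((R:ℝ) - j) + 1) := by
      rw [hf]; congr 1; ring
    rw [hfj, hfj1, ← Real.log_div (by linarith) (ne_of_gt hx)]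
    have hlog := Real.log_le_sub_one_of_pos
      (show (0:ℝ) < ((R:ℝ) - j + 1) / ((R:ℝ) - j) by positivity)
    calc Real.log (((R:ℝ) - j + 1) / ((R:ℝ) - j)) ≤ ((R:ℝ) - j + 1) / ((R:ℝ) - j) - 1 :=
          hlog
      _ = 1 / ((R:ℝ) - j) := by field_simp; ring
      _ = gg R j := rfl
  calc Real.log ((R:ℝ)+1) - Real.log ((R:ℝ)+1-l)
      = ∑ j ∈ Finset.range l, (f j - f (j+1)) := by
        rw [Finset.sum_range_sub' f l, hf]
        simp
    _ ≤ ∑ j ∈ Finset.range l, gg R j := Finset.sum_le_sum key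
    _ = AA R l := rfl

lemma AA_le (R l : ℕ) (hR : l + 1 ≤ R) :
    AA R l ≤ Real.log (R:ℝ) - Real.log ((R:ℝ)-l) := by
  set f : ℕ → ℝ := fun j => Real.log ((R:ℝ)-j) with hf
  have key : ∀ j ∈ Finset.range l, gg R j ≤ f j - f (j+1) := by
    intro j hj
    have hjl : j < l := Finset.mem_range.mp hj
    have hx : (0:ℝ) < (R:ℝ) - j - 1 := by
      have : (j:ℝ) + 2 ≤ (R:ℝ) := by exact_mod_cast (by omega : j + 2 ≤ R)
      linarith
    have hfj1 : f (j+1) = Real.log ((R:ℝ) - j - 1) := by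
      rw [hf]; congr 1; push_cast; ring
    have hfj : f j = Real.log (((R:ℝ) - j - 1) + 1) := by
      rw [hf]; congr 1; ring
    rw [hfj, hfj1, ← Real.log_div (by linarith) (ne_of_gt hx)]
    have hlog := Real.log_le_sub_one_of_pos
      (show (0:ℝ) < ((R:ℝ) - j - 1) / ((R:ℝ) - j - 1 + 1) by positivity)
    have h2 : Real.log (((R:ℝ) - j - 1) / ((R:ℝ) - j - 1 + 1))
        = - Real.log (((R:ℝ) - j - 1 + 1) / ((R:ℝ) - j - 1)) := by
      rw [← Real.log_inv]
      congr 1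
      field_simp
    have h3 : ((R:ℝ) - j - 1) / ((R:ℝ) - j - 1 + 1) - 1 = - (1 / ((R:ℝ) - j - 1 + 1)) := by
      have hz : (R:ℝ) - (j:ℝ) ≠ 0 := by linarith
      rw [show (R:ℝ) - (j:ℝ) - 1 + 1 = (R:ℝ) - (j:ℝ) from by ring]
      field_simp
      ring
    rw [h2, h3] at hlog
    have h4 : gg R j = 1 / ((R:ℝ) - j - 1 + 1) := by
      simp only [gg]
      congr 1
      ring
    rw [h4]
    linarith
  calc AA R l = ∑ j ∈ Finset.range l, gg R j := rfl
    _ ≤ ∑ j ∈ Finset.range l, (f j - f (j+1)) := Finset.sum_le_sum key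
    _ = Real.log (R:ℝ) - Real.log ((R:ℝ)-l) := by
        rw [Finset.sum_range_sub' f l, hf]
        simp

lemma QQ_le (R l : ℕ) (hR : l + 1 ≤ R) : QQ R l ≤ gg R l - gg R 0 := by
  have key : ∀ j ∈ Finset.range l, (gg R j)^2 ≤ gg R (j+1) - gg R j := by
    intro j hj
    have hjl : j < l := Finset.mem_range.mp hj
    have hx : (0:ℝ) < (R:ℝ) - j - 1 := by
      have : (j:ℝ) + 2 ≤ (R:ℝ) := by exact_mod_cast (by omega : j + 2 ≤ R)
      linarith
    have hdiff : gg R (j+1) - gg R j = 1 / (((R:ℝ) - j) * ((R:ℝ) - j - 1)) := by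
      simp only [gg]
      push_cast
      rw [show (R:ℝ) - ((j:ℝ) + 1) = (R:ℝ) - (j:ℝ) - 1 from by ring]
      rw [div_sub_div _ _ (by linarith : (R:ℝ) - j - 1 ≠ 0) (by linarith : (R:ℝ) - j ≠ 0)]
      congr 1
      · ring
      · ring
    have hsq : (gg R j)^2 = 1 / (((R:ℝ) - j) * ((R:ℝ) - j)) := by
      simp only [gg]
      rw [div_pow, one_pow, sq]
    rw [hdiff, hsq]
    apply one_div_le_one_div_of_le
    · exact mul_pos (by linarith) hx
    · nlinarith
  calc QQ R l ≤ ∑ j ∈ Finset.range l, (gg R (j+1) - gg R j) := Finset.sum_le_sum key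
    _ = gg R l - gg R 0 := Finset.sum_range_sub (gg R) l

lemma QQ_ge (R l : ℕ) (hR : l + 1 ≤ R) :
    1/((R:ℝ)+1-l) - 1/((R:ℝ)+1) ≤ QQ R l := by
  set G : ℕ → ℝ := fun j => 1/((R:ℝ)+1-j) with hG
  have key : ∀ j ∈ Finset.range l, G (j+1) - G j ≤ (gg R j)^2 := by
    intro j hj
    have hjl : j < l := Finset.mem_range.mp hj
    have hx : (0:ℝ) < (R:ℝ) - j := by
      have : (j:ℝ) + 1 ≤ (R:ℝ) := by exact_mod_cast (by omega : j + 1 ≤ R)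
      linarith
    have hdiff : G (j+1) - G j = 1 / (((R:ℝ) - j) * ((R:ℝ) - j + 1)) := by
      rw [hG]
      push_cast
      rw [show (R:ℝ) + 1 - ((j:ℝ) + 1) = (R:ℝ) - (j:ℝ) from by ring]
      rw [div_sub_div _ _ (by linarith : (R:ℝ) - j ≠ 0) (by linarith : (R:ℝ) + 1 - (j:ℝ) ≠ 0)]
      rw [show (R:ℝ) + 1 - (j:ℝ) = (R:ℝ) - j + 1 from by ring]
      congr 1
      ring
    have hsq : (gg R j)^2 = 1 / (((R:ℝ) - j) * ((R:ℝ) - j)) := by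
      simp only [gg]
      rw [div_pow, one_pow, sq]
    rw [hdiff, hsq]
    apply one_div_le_one_div_of_le
    · exact mul_pos hx hx
    · nlinarith
  calc 1/((R:ℝ)+1-l) - 1/((R:ℝ)+1) = G l - G 0 := by rw [hG]; simp
    _ = ∑ j ∈ Finset.range l, (G (j+1) - G j) := (Finset.sum_range_sub G l).symm
    _ ≤ ∑ j ∈ Finset.range l, (gg R j)^2 := Finset.sum_le_sum key
    _ = QQ R l := rfl

lemma alg1 (x q lr r : ℝ) (hr : r ≠ 0) :
    ((x - (r - lr)*q) - 1 + (r - lr)/r + ((r - lr)/r)*x)/(x - (r - lr)*q)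
      = ((r*(x - (r - lr)*q) - (lr - (r - lr)*x))/(x - (r - lr)*q))/r := by
  rw [div_div]
  rw [show r*(x - (r - lr)*q) - (lr - (r - lr)*x)
      = ((x - (r - lr)*q) - 1 + (r - lr)/r + ((r - lr)/r)*x) * r from by field_simp; ring]
  rw [mul_div_mul_right _ _ hr]

lemma alg2 (x q lr r : ℝ) (hr : r ≠ 0) :
    (((r - lr)/r)*x - ((x - (r - lr)*q) - 1 + (r - lr)/r + ((r - lr)/r)*x))
        /(1 - (x - (r - lr)*q))
      = (((r - lr)*x - (r*(x - (r - lr)*q) - (lr - (r - lr)*x)))/(1 - (x - (r - lr)*q)))/r := by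
  rw [div_div]
  rw [show (r - lr)*x - (r*(x - (r - lr)*q) - (lr - (r - lr)*x))
      = (((r - lr)/r)*x - ((x - (r - lr)*q) - 1 + (r - lr)/r + ((r - lr)/r)*x)) * r from by
        field_simp; ring]
  rw [mul_div_mul_right _ _ hr]

open Filter Real in
theorem defender_conditional_investment_tendsto (L : ℕ → ℕ)
    (hL : ∀ R, 2 ≤ R → IsUpperBound R (L R)) :
    Filter.Tendsto (fun R : ℕ => EdW R R (astar R (L R)) (dstar R (L R)) / R) Filter.atTop
      (nhds (3 - Real.exp 1)) ∧
    Filter.Tendsto (fun R : ℕ => EdL R R (astar R (L R)) (dstar R (L R)) / R) Filter.atTop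
      (nhds (1 - 1 / (Real.exp 1 - 1))) := by
  have he : (0:ℝ) < Real.exp 1 := Real.exp_pos 1
  have he1 : (1:ℝ) < Real.exp 1 := by
    have h := Real.exp_one_gt_d9
    norm_num at h
    linarith
  -- basic consequences of hL
  have hbase : ∀ R, 2 ≤ R → 1 ≤ L R ∧ L R + 1 ≤ R := by
    intro R hR
    obtain ⟨h1, h2, _, _⟩ := hL R hR
    exact ⟨h1, by omega⟩
  have hμpos : ∀ R : ℕ, 2 ≤ R → (0:ℝ) < (R:ℝ) - L R := fun R hR =>
    Rl_pos R (L R) (hbase R hR).2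
  have hRpos : ∀ R : ℕ, 2 ≤ R → (0:ℝ) < (R:ℝ) := by
    intro R hR
    have : 0 < R := by omega
    exact_mod_cast this
  have hv_lt : ∀ R, 2 ≤ R → AA R (L R) < 1 := by
    intro R hR
    have h := (hL R hR).2.2.1
    rwa [H_AA R (L R) (Nat.le_of_succ_le (hbase R hR).2)] at h
  have hv_gt : ∀ R : ℕ, 2 ≤ R → 1 < AA R (L R) + 1 / ((R:ℝ) - L R) := by
    intro R hR
    have h := (hL R hR).2.2.2
    have e0 : R - L R - 1 = R - (L R + 1) := by omega
    rw [e0, H_AA R (L R + 1) (hbase R hR).2, AA, Finset.sum_range_succ, ← AA] at h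
    exact h
  have hμ_lb : ∀ R : ℕ, 2 ≤ R → ((R:ℝ)+1)/Real.exp 1 - 1 ≤ (R:ℝ) - L R := by
    intro R hR
    have hlR := (hbase R hR).2
    have hμ := hμpos R hR
    have hge := AA_ge R (L R) (by omega)
    have hlt : Real.log ((R:ℝ)+1) - Real.log ((R:ℝ)+1-L R) < 1 :=
      lt_of_le_of_lt hge (hv_lt R hR)
    have hpos1 : (0:ℝ) < (R:ℝ)+1-L R := by linarith
    have hpos2 : (0:ℝ) < (R:ℝ)+1 := by linarith [hRpos R hR]
    rw [← Real.log_div (ne_of_gt hpos2) (ne_of_gt hpos1)] at hlt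
    have hexp : ((R:ℝ)+1)/((R:ℝ)+1-L R) < Real.exp 1 :=
      (Real.log_lt_iff_lt_exp (by positivity)).mp hlt
    rw [div_lt_iff₀ hpos1] at hexp
    rw [sub_le_iff_le_add, div_le_iff₀ he]
    nlinarith
  have hμ_atTop : Filter.Tendsto (fun R : ℕ => (R:ℝ) - L R) Filter.atTop Filter.atTop := by
    apply tendsto_atTop_mono' Filter.atTop
      (Filter.eventually_atTop.mpr ⟨2, fun R hR => hμ_lb R hR⟩)
    have h1 : Filter.Tendsto (fun R : ℕ => ((R:ℝ)+1)) Filter.atTop Filter.atTop :=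
      tendsto_atTop_add_const_right _ 1 tendsto_natCast_atTop_atTop
    have h3 := tendsto_atTop_add_const_right _ (-1:ℝ) (Tendsto.atTop_div_const he h1)
    simpa [sub_eq_add_neg] using h3
  have hinv : Filter.Tendsto (fun R : ℕ => 1/((R:ℝ) - L R)) Filter.atTop (nhds 0) := by
    simpa [one_div, Pi.inv_def] using hμ_atTop.inv_tendsto_atTop
  have hrinv : Filter.Tendsto (fun R : ℕ => ((R:ℝ))⁻¹) Filter.atTop (nhds 0) :=
    tendsto_inv_atTop_zero.comp tendsto_natCast_atTop_atTop
  -- v → 1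
  have hv : Filter.Tendsto (fun R : ℕ => AA R (L R)) Filter.atTop (nhds 1) := by
    apply tendsto_of_tendsto_of_tendsto_of_le_of_le'
      (f := fun R : ℕ => AA R (L R)) (g := fun R : ℕ => 1 - 1/((R:ℝ) - L R))
      (h := fun _ : ℕ => (1:ℝ))
    · simpa using tendsto_const_nhds.sub hinv
    · exact tendsto_const_nhds
    · filter_upwards [Filter.eventually_atTop.mpr ⟨2, fun (R : ℕ) (h : 2 ≤ R) => h⟩] with R hR
      have := hv_gt R hR
      linarith
    · filter_upwards [Filter.eventually_atTop.mpr ⟨2, fun (R : ℕ) (h : 2 ≤ R) => h⟩] with R hR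
      exact le_of_lt (hv_lt R hR)
  -- u → e⁻¹
  have hu : Filter.Tendsto (fun R : ℕ => ((R:ℝ) - L R)/R) Filter.atTop
      (nhds (Real.exp 1)⁻¹) := by
    apply tendsto_of_tendsto_of_tendsto_of_le_of_le'
      (g := fun R : ℕ => (1 + ((R:ℝ))⁻¹) * (Real.exp 1)⁻¹ - ((R:ℝ))⁻¹)
      (h := fun R : ℕ => Real.exp (1/((R:ℝ) - L R)) * (Real.exp 1)⁻¹)
    · have := (((tendsto_const_nhds (x := (1:ℝ))).add hrinv).mul
        (tendsto_const_nhds (x := (Real.exp 1)⁻¹))).sub hrinv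
      simpa using this
    · have := ((Real.continuous_exp.tendsto 0).comp hinv).mul
        (tendsto_const_nhds (x := (Real.exp 1)⁻¹))
      simpa [Function.comp_def, Real.exp_zero] using this
    · filter_upwards [Filter.eventually_atTop.mpr ⟨2, fun (R : ℕ) (h : 2 ≤ R) => h⟩] with R hR
      have hR0 := hRpos R hR
      calc (1 + ((R:ℝ))⁻¹) * (Real.exp 1)⁻¹ - ((R:ℝ))⁻¹
          = (((R:ℝ)+1)/Real.exp 1 - 1)/R := by field_simp
        _ ≤ ((R:ℝ) - L R)/R := (div_le_div_iff_of_pos_right hR0).mpr (hμ_lb R hR)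
    · filter_upwards [Filter.eventually_atTop.mpr ⟨2, fun (R : ℕ) (h : 2 ≤ R) => h⟩] with R hR
      have hμ := hμpos R hR
      have hR0 := hRpos R hR
      have h1 : 1 - 1/((R:ℝ) - L R) < AA R (L R) := by linarith [hv_gt R hR]
      have h2 := AA_le R (L R) (hbase R hR).2
      have h3 : 1 - 1/((R:ℝ) - L R) < Real.log ((R:ℝ)/((R:ℝ) - L R)) := by
        rw [Real.log_div (ne_of_gt hR0) (ne_of_gt hμ)]
        linarith
      have h4 : Real.exp (1 - 1/((R:ℝ) - L R)) < (R:ℝ)/((R:ℝ) - L R) :=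
        (Real.lt_log_iff_exp_lt (by positivity)).mp h3
      have h5 : ((R:ℝ) - L R)/R < (Real.exp (1 - 1/((R:ℝ) - L R)))⁻¹ := by
        rw [show ((R:ℝ) - L R)/(R:ℝ) = ((R:ℝ)/((R:ℝ) - L R))⁻¹ from by rw [inv_div]]
        exact inv_strictAnti₀ (Real.exp_pos _) h4
      have h6 : (Real.exp (1 - 1/((R:ℝ) - L R)))⁻¹
          = Real.exp (1/((R:ℝ) - L R)) * (Real.exp 1)⁻¹ := by
        rw [← Real.exp_neg, show -(1 - 1/((R:ℝ) - L R)) = 1/((R:ℝ) - L R) - 1 from by ring,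
          Real.exp_sub, div_eq_mul_inv]
      rw [h6] at h5
      exact le_of_lt h5
  -- q = μ * QQ → 1 - e⁻¹
  have hq : Filter.Tendsto (fun R : ℕ => ((R:ℝ) - L R) * QQ R (L R)) Filter.atTop
      (nhds (1 - (Real.exp 1)⁻¹)) := by
    apply tendsto_of_tendsto_of_tendsto_of_le_of_le'
      (g := fun R : ℕ => 1 - 1/(((R:ℝ) - L R) + 1) - ((R:ℝ) - L R)/R)
      (h := fun R : ℕ => 1 - ((R:ℝ) - L R)/R)
    · have ht : Filter.Tendsto (fun R : ℕ => 1/(((R:ℝ) - L R) + 1)) Filter.atTop (nhds 0) := by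
        simpa [one_div, Pi.inv_def] using
          (tendsto_atTop_add_const_right _ (1:ℝ) hμ_atTop).inv_tendsto_atTop
      have := ((tendsto_const_nhds (x := (1:ℝ))).sub ht).sub hu
      simpa using this
    · exact tendsto_const_nhds.sub hu
    · filter_upwards [Filter.eventually_atTop.mpr ⟨2, fun (R : ℕ) (h : 2 ≤ R) => h⟩] with R hR
      have hμ := hμpos R hR
      have hR0 := hRpos R hR
      have hQ := QQ_ge R (L R) (hbase R hR).2
      have step1 : ((R:ℝ) - L R) * (1/((R:ℝ)+1-L R) - 1/((R:ℝ)+1))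
          ≤ ((R:ℝ) - L R) * QQ R (L R) := by
        apply mul_le_mul_of_nonneg_left hQ (le_of_lt hμ)
      have e3 : ((R:ℝ) - L R) * (1/((R:ℝ)+1-L R) - 1/((R:ℝ)+1))
          = 1 - 1/(((R:ℝ) - L R) + 1) - ((R:ℝ) - L R)/((R:ℝ)+1) := by
        rw [show (R:ℝ)+1-(L R:ℝ) = ((R:ℝ) - L R) + 1 from by ring]
        field_simp
        ring
      have e2 : ((R:ℝ) - L R)/((R:ℝ)+1) ≤ ((R:ℝ) - L R)/R :=
        div_le_div_of_nonneg_left (le_of_lt hμ) hR0 (by linarith)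
      linarith
    · filter_upwards [Filter.eventually_atTop.mpr ⟨2, fun (R : ℕ) (h : 2 ≤ R) => h⟩] with R hR
      have hμ := hμpos R hR
      have hR0 := hRpos R hR
      have hQ := QQ_le R (L R) (hbase R hR).2
      have step1 : ((R:ℝ) - L R) * QQ R (L R)
          ≤ ((R:ℝ) - L R) * (gg R (L R) - gg R 0) := by
        apply mul_le_mul_of_nonneg_left hQ (le_of_lt hμ)
      have e3 : ((R:ℝ) - L R) * (gg R (L R) - gg R 0) = 1 - ((R:ℝ) - L R)/R := by
        simp only [gg, Nat.cast_zero, sub_zero]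
        field_simp
      linarith
  -- P → e⁻¹ and conclusion
  have hP : Filter.Tendsto (fun R : ℕ => AA R (L R) - ((R:ℝ) - L R) * QQ R (L R))
      Filter.atTop (nhds (Real.exp 1)⁻¹) := by
    have h := hv.sub hq
    rwa [show (1:ℝ) - (1 - (Real.exp 1)⁻¹) = (Real.exp 1)⁻¹ from by ring] at h
  have hie : (Real.exp 1)⁻¹ ≠ 0 := by positivity
  have hinvlt : (Real.exp 1)⁻¹ < 1 := by
    rw [inv_eq_one_div, div_lt_one he]
    exact he1
  have hie1 : (1:ℝ) - (Real.exp 1)⁻¹ ≠ 0 := by linarith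
  have hn1 : Filter.Tendsto (fun R : ℕ =>
      (AA R (L R) - ((R:ℝ) - L R) * QQ R (L R)) - 1 + ((R:ℝ) - L R)/R
        + (((R:ℝ) - L R)/R) * AA R (L R)) Filter.atTop
      (nhds ((Real.exp 1)⁻¹ - 1 + (Real.exp 1)⁻¹ + (Real.exp 1)⁻¹ * 1)) :=
    ((hP.sub (tendsto_const_nhds (x := (1:ℝ)))).add hu).add (hu.mul hv)
  constructor
  · have hlim := hn1.div hP hie
    rw [show ((Real.exp 1)⁻¹ - 1 + (Real.exp 1)⁻¹ + (Real.exp 1)⁻¹ * 1)/(Real.exp 1)⁻¹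
        = 3 - Real.exp 1 from by field_simp; ring] at hlim
    apply hlim.congr'
    filter_upwards [Filter.eventually_atTop.mpr ⟨2, fun (R : ℕ) (h : 2 ≤ R) => h⟩] with R hR
    have hlR := (hbase R hR).2
    have hR0 := (hRpos R hR).ne'
    simp only [EdW]
    rw [NW_eq R (L R) hlR, PW_eq R (L R) hlR]
    exact alg1 (AA R (L R)) (QQ R (L R)) ((L R : ℕ):ℝ) ((R:ℕ):ℝ) hR0
  · have hn2 := (hu.mul hv).sub hn1
    have hden := (tendsto_const_nhds (x := (1:ℝ))).sub hP
    have hlim := hn2.div hden hie1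
    have hee : Real.exp 1 - 1 ≠ 0 := by linarith
    rw [show ((Real.exp 1)⁻¹ * 1 - ((Real.exp 1)⁻¹ - 1 + (Real.exp 1)⁻¹ + (Real.exp 1)⁻¹ * 1))
        /(1 - (Real.exp 1)⁻¹) = 1 - 1/(Real.exp 1 - 1) from by field_simp; ring] at hlim
    apply hlim.congr'
    filter_upwards [Filter.eventually_atTop.mpr ⟨2, fun (R : ℕ) (h : 2 ≤ R) => h⟩] with R hR
    have hlR := (hbase R hR).2
    have hR0 := (hRpos R hR).ne'
    simp only [EdL]
    rw [NL_eq R (L R) hlR, NW_eq R (L R) hlR, PW_eq R (L R) hlR]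
    exact alg2 (AA R (L R)) (QQ R (L R)) ((L R : ℕ):ℝ) ((R:ℕ):ℝ) hR0
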